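/- Let f be continuous on [0,U), thrice differentiable on (0,U), with f(0) = 0 and f''' strictly decreasing on (0,U). Then δ ↦ ‖f − g_δ‖_∞ := max_{w∈[0,δ]} |f(w) − g_δ(w)| is strictly increasing on (0,U), where g_δ is the δ-smoothing of f. -/

import Mathlib

open Set

/-- the δ-smoothing cubic, exactly as in the statement. -/
noncomputable def smG (f : ℝ → ℝ) (δ w : ℝ) : ℝ :=
  (3 * f δ / δ - 2 * deriv f δ + δ * deriv (deriv f) δ / 2) * w +
    (-6 * f δ / δ ^ 2 + 6 * deriv f δ / δ - 2 * deriv (deriv f) δ) / 2 * w ^ 2 +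
    (6 * f δ / δ ^ 3 - 6 * deriv f δ / δ ^ 2 + 3 * deriv (deriv f) δ / δ) / 6 * w ^ 3

lemma smG_self (f : ℝ → ℝ) {δ : ℝ} (hδ : δ ≠ 0) : smG f δ δ = f δ := by
  unfold smG; field_simp; ring

lemma smG_zero (f : ℝ → ℝ) (δ : ℝ) : smG f δ 0 = 0 := by
  unfold smG; ring

lemma smG_cont (f : ℝ → ℝ) (δ : ℝ) : Continuous (fun w => smG f δ w) := by
  unfold smG; fun_prop

/-- derivative of `t ↦ smG f t w` -/
lemma hasDerivAt_smG (f : ℝ → ℝ) {δ : ℝ} (w : ℝ) (hδ : 0 < δ)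
    (hd1 : DifferentiableAt ℝ f δ) (hd2 : DifferentiableAt ℝ (deriv f) δ)
    (hd3 : DifferentiableAt ℝ (deriv (deriv f)) δ) :
    HasDerivAt (fun t => smG f t w)
      ((deriv (deriv (deriv f)) δ -
          (6 * f δ / δ ^ 3 - 6 * deriv f δ / δ ^ 2 + 3 * deriv (deriv f) δ / δ)) / (2 * δ) *
        (w * (w - δ) ^ 2)) δ := by
  have h1 : HasDerivAt f (deriv f δ) δ := hd1.hasDerivAt
  have h2 : HasDerivAt (deriv f) (deriv (deriv f) δ) δ := hd2.hasDerivAt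
  have h3 : HasDerivAt (deriv (deriv f)) (deriv (deriv (deriv f)) δ) δ := hd3.hasDerivAt
  have hδ' : δ ≠ 0 := hδ.ne'
  have hδ2 : δ ^ 2 ≠ 0 := pow_ne_zero _ hδ'
  have hδ3 : δ ^ 3 ≠ 0 := pow_ne_zero _ hδ'
  have hid : HasDerivAt (fun t : ℝ => t) 1 δ := hasDerivAt_id δ
  have hA := ((h1.const_mul 3).div hid hδ')
  have hB := (hid.mul h3).div_const 2
  have hT1 := ((hA.sub (h2.const_mul 2)).add hB).mul_const w
  have hC := ((h1.const_mul (-6)).div (hasDerivAt_pow 2 δ) hδ2)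
  have hD := ((h2.const_mul 6).div hid hδ')
  have hT2 := (((hC.add hD).sub (h3.const_mul 2)).div_const 2).mul_const (w ^ 2)
  have hE := ((h1.const_mul 6).div (hasDerivAt_pow 3 δ) hδ3)
  have hF := ((h2.const_mul 6).div (hasDerivAt_pow 2 δ) hδ2)
  have hG := ((h3.const_mul 3).div hid hδ')
  have hT3 := (((hE.sub hF).add hG).div_const 6).mul_const (w ^ 3)
  have htot := (hT1.add hT2).add hT3
  have heq : (fun t => smG f t w) = fun t =>
      (3 * f t / t - 2 * deriv f t + t * deriv (deriv f) t / 2) * w +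
        (-6 * f t / t ^ 2 + 6 * deriv f t / t - 2 * deriv (deriv f) t) / 2 * w ^ 2 +
        (6 * f t / t ^ 3 - 6 * deriv f t / t ^ 2 + 3 * deriv (deriv f) t / t) / 6 * w ^ 3 := rfl
  rw [heq]
  refine htot.congr_deriv ?_
  push_cast
  field_simp
  ring

/-- Rolle chain: the third derivative at δ is below the cubic coefficient times 6. -/
lemma third_lt (f : ℝ → ℝ) (U : EReal) (hf0 : f 0 = 0)
    (hcont : ContinuousOn f {w : ℝ | 0 ≤ w ∧ (w : EReal) < U})
    (hdiff : ∀ w : ℝ, 0 < w → (w : EReal) < U → DifferentiableAt ℝ f w ∧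
      DifferentiableAt ℝ (deriv f) w ∧ DifferentiableAt ℝ (deriv (deriv f)) w)
    (hanti : StrictAntiOn (deriv (deriv (deriv f))) {w : ℝ | 0 < w ∧ (w : EReal) < U})
    {δ : ℝ} (hδ : 0 < δ) (hδU : (δ : EReal) < U) :
    deriv (deriv (deriv f)) δ <
      6 * f δ / δ ^ 3 - 6 * deriv f δ / δ ^ 2 + 3 * deriv (deriv f) δ / δ := by
  have hδ' : δ ≠ 0 := hδ.ne'
  set a := 3 * f δ / δ - 2 * deriv f δ + δ * deriv (deriv f) δ / 2 with ha
  set b := (-6 * f δ / δ ^ 2 + 6 * deriv f δ / δ - 2 * deriv (deriv f) δ) / 2 with hb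
  set c := (6 * f δ / δ ^ 3 - 6 * deriv f δ / δ ^ 2 + 3 * deriv (deriv f) δ / δ) / 6 with hc
  have hsub : ∀ x : ℝ, 0 < x → x ≤ δ → (x : EReal) < U := fun x hx0 hxδ =>
    lt_of_le_of_lt (EReal.coe_le_coe_iff.mpr hxδ) hδU
  -- first Rolle on e = f - cubic
  have he0 : (fun x => f x - (a * x + b * x ^ 2 + c * x ^ 3)) 0 =
      (fun x => f x - (a * x + b * x ^ 2 + c * x ^ 3)) δ := by
    simp only
    rw [hf0, ha, hb, hc]
    field_simp
    ring
  have hce : ContinuousOn (fun x => f x - (a * x + b * x ^ 2 + c * x ^ 3)) (Icc 0 δ) := by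
    apply ContinuousOn.sub
    · exact hcont.mono (fun x hx => ⟨hx.1, lt_of_le_of_lt (EReal.coe_le_coe_iff.mpr hx.2) hδU⟩)
    · fun_prop
  obtain ⟨ξ1, hξ1, hdξ1⟩ := exists_deriv_eq_zero hδ hce he0
  have hξ1U : (ξ1 : EReal) < U := hsub ξ1 hξ1.1 hξ1.2.le
  have hfd1 := (hdiff ξ1 hξ1.1 hξ1U).1
  have hp1 : HasDerivAt (fun x : ℝ => a * x + b * x ^ 2 + c * x ^ 3)
      (a + 2 * b * ξ1 + 3 * c * ξ1 ^ 2) ξ1 := by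
    have := (((hasDerivAt_id ξ1).const_mul a).add ((hasDerivAt_pow 2 ξ1).const_mul b)).add
      ((hasDerivAt_pow 3 ξ1).const_mul c)
    refine this.congr_deriv ?_
    push_cast; ring
  have hval1 : deriv f ξ1 - (a + 2 * b * ξ1 + 3 * c * ξ1 ^ 2) = 0 := by
    have := (hfd1.hasDerivAt.sub hp1).deriv
    rw [← this]; exact hdξ1
  -- second Rolle on e1 = f' - derivative of cubic
  have he1δ : (fun x => deriv f x - (a + 2 * b * x + 3 * c * x ^ 2)) ξ1 =
      (fun x => deriv f x - (a + 2 * b * x + 3 * c * x ^ 2)) δ := by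
    simp only
    rw [hval1]
    rw [ha, hb, hc]
    field_simp
    ring
  have hce1 : ContinuousOn (fun x => deriv f x - (a + 2 * b * x + 3 * c * x ^ 2)) (Icc ξ1 δ) := by
    apply ContinuousOn.sub
    · intro x hx
      exact ((hdiff x (lt_of_lt_of_le hξ1.1 hx.1) (hsub x (lt_of_lt_of_le hξ1.1 hx.1)
        hx.2)).2.1).continuousAt.continuousWithinAt
    · fun_prop
  obtain ⟨ξ2, hξ2, hdξ2⟩ := exists_deriv_eq_zero hξ1.2 hce1 he1δ
  have hξ20 : 0 < ξ2 := lt_trans hξ1.1 hξ2.1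
  have hξ2U : (ξ2 : EReal) < U := hsub ξ2 hξ20 hξ2.2.le
  have hfd2 := (hdiff ξ2 hξ20 hξ2U).2.1
  have hp2 : HasDerivAt (fun x : ℝ => a + 2 * b * x + 3 * c * x ^ 2)
      (2 * b + 6 * c * ξ2) ξ2 := by
    have := ((hasDerivAt_const ξ2 a).add ((hasDerivAt_id ξ2).const_mul (2 * b))).add
      ((hasDerivAt_pow 2 ξ2).const_mul (3 * c))
    refine this.congr_deriv ?_
    push_cast; ring
  have hval2 : deriv (deriv f) ξ2 - (2 * b + 6 * c * ξ2) = 0 := by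
    have := (hfd2.hasDerivAt.sub hp2).deriv
    rw [← this]; exact hdξ2
  -- third Rolle on e2 = f'' - second derivative of cubic
  have he2δ : (fun x => deriv (deriv f) x - (2 * b + 6 * c * x)) ξ2 =
      (fun x => deriv (deriv f) x - (2 * b + 6 * c * x)) δ := by
    simp only
    rw [hval2]
    rw [hb, hc]
    field_simp
    ring
  have hce2 : ContinuousOn (fun x => deriv (deriv f) x - (2 * b + 6 * c * x)) (Icc ξ2 δ) := by
    apply ContinuousOn.sub
    · intro x hx
      exact ((hdiff x (lt_of_lt_of_le hξ20 hx.1) (hsub x (lt_of_lt_of_le hξ20 hx.1)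
        hx.2)).2.2).continuousAt.continuousWithinAt
    · fun_prop
  obtain ⟨ξ3, hξ3, hdξ3⟩ := exists_deriv_eq_zero hξ2.2 hce2 he2δ
  have hξ30 : 0 < ξ3 := lt_trans hξ20 hξ3.1
  have hξ3U : (ξ3 : EReal) < U := hsub ξ3 hξ30 hξ3.2.le
  have hfd3 := (hdiff ξ3 hξ30 hξ3U).2.2
  have hp3 : HasDerivAt (fun x : ℝ => 2 * b + 6 * c * x) (6 * c) ξ3 := by
    have := (hasDerivAt_const ξ3 (2 * b)).add ((hasDerivAt_id ξ3).const_mul (6 * c))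
    refine this.congr_deriv ?_
    ring
  have hval3 : deriv (deriv (deriv f)) ξ3 - 6 * c = 0 := by
    have := (hfd3.hasDerivAt.sub hp3).deriv
    rw [← this]; exact hdξ3
  have hfin : deriv (deriv (deriv f)) δ < deriv (deriv (deriv f)) ξ3 :=
    hanti ⟨hξ30, hξ3U⟩ ⟨hδ, hδU⟩ hξ3.2
  have : deriv (deriv (deriv f)) ξ3 = 6 * c := by linarith
  rw [this] at hfin
  rw [hc] at hfin
  linarith

/-- key monotonicity: smG is strictly decreasing in δ (for fixed w with 0 < w ≤ s). -/
lemma smG_lt (f : ℝ → ℝ) (U : EReal) (hf0 : f 0 = 0)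
    (hcont : ContinuousOn f {w : ℝ | 0 ≤ w ∧ (w : EReal) < U})
    (hdiff : ∀ w : ℝ, 0 < w → (w : EReal) < U → DifferentiableAt ℝ f w ∧
      DifferentiableAt ℝ (deriv f) w ∧ DifferentiableAt ℝ (deriv (deriv f)) w)
    (hanti : StrictAntiOn (deriv (deriv (deriv f))) {w : ℝ | 0 < w ∧ (w : EReal) < U})
    {w s t : ℝ} (hw : 0 < w) (hws : w ≤ s) (hst : s < t) (htU : (t : EReal) < U) :
    smG f t w < smG f s w := by
  have hs0 : 0 < s := lt_of_lt_of_le hw hws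
  have hsub : ∀ x : ℝ, s ≤ x → x ≤ t → 0 < x ∧ (x : EReal) < U := fun x h1 h2 =>
    ⟨lt_of_lt_of_le hs0 h1, lt_of_le_of_lt (EReal.coe_le_coe_iff.mpr h2) htU⟩
  have hderiv : ∀ x ∈ Icc s t, HasDerivAt (fun u => smG f u w)
      ((deriv (deriv (deriv f)) x -
          (6 * f x / x ^ 3 - 6 * deriv f x / x ^ 2 + 3 * deriv (deriv f) x / x)) / (2 * x) *
        (w * (w - x) ^ 2)) x := by
    intro x hx
    obtain ⟨hx0, hxU⟩ := hsub x hx.1 hx.2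
    obtain ⟨h1, h2, h3⟩ := hdiff x hx0 hxU
    exact hasDerivAt_smG f w hx0 h1 h2 h3
  have hmono : StrictAntiOn (fun u => smG f u w) (Icc s t) := by
    apply strictAntiOn_of_deriv_neg (convex_Icc s t)
    · intro x hx
      exact (hderiv x hx).differentiableAt.continuousAt.continuousWithinAt
    · intro x hx
      rw [interior_Icc] at hx
      obtain ⟨hx0, hxU⟩ := hsub x hx.1.le hx.2.le
      rw [(hderiv x ⟨hx.1.le, hx.2.le⟩).deriv]
      have hlt := third_lt f U hf0 hcont hdiff hanti hx0 hxU
      have hwx : w < x := lt_of_le_of_lt hws hx.1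
      apply mul_neg_of_neg_of_pos
      · apply div_neg_of_neg_of_pos
        · linarith
        · linarith
      · have h1 : (0:ℝ) < x - w := sub_pos.mpr hwx
        nlinarith [mul_pos hw (mul_pos h1 h1)]
  exact hmono (left_mem_Icc.mpr hst.le) (right_mem_Icc.mpr hst.le) hst

theorem stmt_16 (f : ℝ → ℝ) (U : EReal) (hU : 0 < U) (hf0 : f 0 = 0)
    (hcont : ContinuousOn f {w : ℝ | 0 ≤ w ∧ (w : EReal) < U})
    (hdiff : ∀ w : ℝ, 0 < w → (w : EReal) < U → DifferentiableAt ℝ f w ∧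
      DifferentiableAt ℝ (deriv f) w ∧ DifferentiableAt ℝ (deriv (deriv f)) w)
    (hanti : StrictAntiOn (deriv (deriv (deriv f))) {w : ℝ | 0 < w ∧ (w : EReal) < U})
    (Φ : ℝ → ℝ)
    (hΦ : ∀ δ : ℝ, Φ δ = sSup ((fun w : ℝ =>
      |f w - ((3 * f δ / δ - 2 * deriv f δ + δ * deriv (deriv f) δ / 2) * w +
        (-6 * f δ / δ ^ 2 + 6 * deriv f δ / δ - 2 * deriv (deriv f) δ) / 2 * w ^ 2 +
        (6 * f δ / δ ^ 3 - 6 * deriv f δ / δ ^ 2 + 3 * deriv (deriv f) δ / δ) / 6 * w ^ 3)|)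
      '' Set.Icc 0 δ)) :
    StrictMonoOn Φ {δ : ℝ | 0 < δ ∧ (δ : EReal) < U} := by
  -- rewrite Φ in terms of smG
  have hΦ' : ∀ δ : ℝ, Φ δ = sSup ((fun w : ℝ => |f w - smG f δ w|) '' Set.Icc 0 δ) := by
    intro δ; exact hΦ δ
  intro δ1 h1 δ2 h2 hlt
  obtain ⟨hδ1, hδ1U⟩ := h1
  obtain ⟨hδ2, hδ2U⟩ := h2
  rw [hΦ' δ1, hΦ' δ2]
  have hIccsub : ∀ δ : ℝ, (δ : EReal) < U → Icc 0 δ ⊆ {w : ℝ | 0 ≤ w ∧ (w : EReal) < U} :=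
    fun δ hδU x hx => ⟨hx.1, lt_of_le_of_lt (EReal.coe_le_coe_iff.mpr hx.2) hδU⟩
  have hcF : ∀ δ : ℝ, (δ : EReal) < U →
      ContinuousOn (fun w : ℝ => |f w - smG f δ w|) (Icc 0 δ) := fun δ hδU =>
    ((hcont.mono (hIccsub δ hδU)).sub (smG_cont f δ).continuousOn).abs
  have hcomp1 : IsCompact ((fun w : ℝ => |f w - smG f δ1 w|) '' Icc 0 δ1) :=
    (isCompact_Icc).image_of_continuousOn (hcF δ1 hδ1U)
  have hcomp2 : IsCompact ((fun w : ℝ => |f w - smG f δ2 w|) '' Icc 0 δ2) :=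
    (isCompact_Icc).image_of_continuousOn (hcF δ2 hδ2U)
  have hne1 : ((fun w : ℝ => |f w - smG f δ1 w|) '' Icc 0 δ1).Nonempty :=
    (nonempty_Icc.mpr hδ1.le).image _
  obtain ⟨w0, hw0mem, hw0eq0⟩ := hcomp1.sSup_mem hne1
  have hw0eq : |f w0 - smG f δ1 w0| = sSup ((fun w : ℝ => |f w - smG f δ1 w|) '' Icc 0 δ1) := hw0eq0
  have hbdd2 : BddAbove ((fun w : ℝ => |f w - smG f δ2 w|) '' Icc 0 δ2) := hcomp2.bddAbove
  have hle2 : ∀ x ∈ Icc 0 δ2, |f x - smG f δ2 x| ≤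
      sSup ((fun w : ℝ => |f w - smG f δ2 w|) '' Icc 0 δ2) := fun x hx =>
    le_csSup hbdd2 (mem_image_of_mem _ hx)
  rcases eq_or_lt_of_le hw0mem.1 with h0 | h0
  · -- w0 = 0 : sup over [0,δ1] is 0; compare with value at δ1 for the larger δ2
    have hz : |f w0 - smG f δ1 w0| = 0 := by
      rw [← h0, hf0, smG_zero]; simp
    rw [← hw0eq, hz]
    have hx : δ1 ∈ Icc (0:ℝ) δ2 := ⟨hδ1.le, hlt.le⟩
    have hpos : 0 < f δ1 - smG f δ2 δ1 := by
      have := smG_lt f U hf0 hcont hdiff hanti hδ1 le_rfl hlt hδ2U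
      rw [smG_self f hδ1.ne'] at this
      linarith
    calc (0:ℝ) < f δ1 - smG f δ2 δ1 := hpos
      _ ≤ |f δ1 - smG f δ2 δ1| := le_abs_self _
      _ ≤ _ := hle2 δ1 hx
  · -- w0 > 0
    have hnn : 0 ≤ f w0 - smG f δ1 w0 := by
      rcases eq_or_lt_of_le hw0mem.2 with hwδ | hwδ
      · rw [hwδ, smG_self f hδ1.ne']; simp
      · have := smG_lt f U hf0 hcont hdiff hanti h0 le_rfl hwδ hδ1U
        rw [smG_self f h0.ne'] at this
        linarith
    have hstep : smG f δ2 w0 < smG f δ1 w0 :=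
      smG_lt f U hf0 hcont hdiff hanti h0 hw0mem.2 hlt hδ2U
    have hx2 : w0 ∈ Icc (0:ℝ) δ2 := ⟨hw0mem.1, le_trans hw0mem.2 hlt.le⟩
    calc sSup ((fun w : ℝ => |f w - smG f δ1 w|) '' Icc 0 δ1)
        = |f w0 - smG f δ1 w0| := hw0eq.symm
      _ = f w0 - smG f δ1 w0 := abs_of_nonneg hnn
      _ < f w0 - smG f δ2 w0 := by linarith
      _ ≤ |f w0 - smG f δ2 w0| := le_abs_self _
      _ ≤ _ := hle2 w0 hx2
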